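/- arXiv:2106.01214 — 2 statements merged into one kernel-verified Lean document; each statement's English description precedes it below -/
import Mathlib

section
/- Under the tail condition that g(y)·(log f)'(y) → 0 as y → ±∞ and integrability of all terms, the integration-by-parts identity holds: ∫ (log g)'(y)(log f)'(y) g(y) dy = −∫ (log f)''(y) g(y) dy; consequently D_F(g‖f) = (1/2)∫ H(y; f) g(y) dy + (1/2)∫ ((log g)'(y))² g(y) dy where H(y; f) = 2(log f)''(y) + ((log f)'(y))². -/
open Real MeasureTheory Filter

noncomputable def hyv (f : ℝ → ℝ) (y : ℝ) : ℝ :=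
  2 * deriv (deriv fun x => Real.log (f x)) y + (deriv (fun x => Real.log (f x)) y) ^ 2

noncomputable def fisherDiv (g f : ℝ → ℝ) : ℝ :=
  (1/2) * ∫ y : ℝ,
    (deriv (fun x => Real.log (g x)) y - deriv (fun x => Real.log (f x)) y)^2 * g y

/-- Integration by parts for Fisher's divergence: under a tail condition the cross
term equals minus the expected second log-derivative of `f`, and consequently
`D_F(g‖f)` equals half the expected Hyvärinen score plus a term not depending on `f`. -/
theorem stmt9 (g f : ℝ → ℝ) (hg : ∀ y, 0 < g y) (hf : ∀ y, 0 < f y)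
    (hg1 : ContDiff ℝ 1 g) (hf2 : ContDiff ℝ 2 f)
    (hgInt : Integrable g) (hgone : ∫ y : ℝ, g y = 1)
    (htailTop : Tendsto (fun y => g y * deriv (fun x => Real.log (f x)) y) atTop (nhds 0))
    (htailBot : Tendsto (fun y => g y * deriv (fun x => Real.log (f x)) y) atBot (nhds 0))
    (h1 : Integrable fun y : ℝ =>
      deriv (fun x => Real.log (g x)) y * deriv (fun x => Real.log (f x)) y * g y)
    (h2 : Integrable fun y : ℝ => deriv (deriv fun x => Real.log (f x)) y * g y)
    (h3 : Integrable fun y : ℝ => (deriv (fun x => Real.log (g x)) y)^2 * g y)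
    (h4 : Integrable fun y : ℝ => (deriv (fun x => Real.log (f x)) y)^2 * g y) :
    (∫ y : ℝ, deriv (fun x => Real.log (g x)) y * deriv (fun x => Real.log (f x)) y * g y
      = -∫ y : ℝ, deriv (deriv fun x => Real.log (f x)) y * g y) ∧
    fisherDiv g f = (1/2) * (∫ y : ℝ, hyv f y * g y)
      + (1/2) * ∫ y : ℝ, (deriv (fun x => Real.log (g x)) y)^2 * g y := by
  set a : ℝ → ℝ := deriv (fun x => Real.log (g x)) with ha
  set b : ℝ → ℝ := deriv (fun x => Real.log (f x)) with hb
  set c : ℝ → ℝ := deriv (deriv fun x => Real.log (f x)) with hc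
  -- derivative facts
  have hgd : ∀ y, HasDerivAt g (deriv g y) y :=
    fun y => (hg1.differentiable one_ne_zero y).hasDerivAt
  have hag : ∀ y, a y = deriv g y / g y := by
    intro y
    exact ((hgd y).log (hg y).ne').deriv
  have hlfc : ContDiff ℝ 2 (fun x => Real.log (f x)) :=
    hf2.log (fun x => (hf x).ne')
  have hbcd : ContDiff ℝ 1 b := by
    rw [show (2 : WithTop ℕ∞) = 1 + 1 from by norm_num] at hlfc
    exact (contDiff_succ_iff_deriv.mp hlfc).2.2
  have hbd : ∀ y, HasDerivAt b (c y) y :=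
    fun y => (hbcd.differentiable one_ne_zero y).hasDerivAt
  -- integration by parts
  have huv' : Integrable (g * c) := by
    refine h2.congr ?_
    filter_upwards with y
    simp [Pi.mul_apply, mul_comm]
  have hu'v : Integrable (deriv g * b) := by
    refine h1.congr ?_
    filter_upwards with y
    have : a y * b y * g y = deriv g y * b y := by
      rw [hag y]; field_simp [(hg y).ne']
    simpa [Pi.mul_apply] using this
  have htop : Tendsto (g * b) atTop (nhds 0) := htailTop
  have hbot : Tendsto (g * b) atBot (nhds 0) := htailBot
  have key := integral_mul_deriv_eq_deriv_mul (fun y _ => hgd y) (fun y _ => hbd y) huv' hu'v hbot htop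
  have part1 : (∫ y : ℝ, a y * b y * g y) = -∫ y : ℝ, c y * g y := by
    have e1 : (∫ y : ℝ, a y * b y * g y) = ∫ y : ℝ, deriv g y * b y := by
      refine integral_congr_ae ?_
      filter_upwards with y
      rw [hag y]; field_simp [(hg y).ne']
    have e2 : (∫ y : ℝ, c y * g y) = ∫ y : ℝ, g y * c y := by
      simp [mul_comm]
    rw [e1, e2]
    linarith [key]
  refine ⟨part1, ?_⟩
  -- expansion of the square
  have efun : (fun y => (a y - b y)^2 * g y)
      = fun y => (a y)^2 * g y + (b y)^2 * g y - 2 * (a y * b y * g y) :=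
    funext fun y => by ring
  have ehyv : (fun y => hyv f y * g y)
      = fun y => 2 * (c y * g y) + (b y)^2 * g y :=
    funext fun y => by simp only [hyv]; ring
  have eint : (∫ y : ℝ, (a y - b y)^2 * g y)
      = (∫ y : ℝ, (a y)^2 * g y) + (∫ y : ℝ, (b y)^2 * g y)
        - 2 * ∫ y : ℝ, a y * b y * g y := by
    have i34 : Integrable (fun y : ℝ => (a y)^2 * g y + (b y)^2 * g y) := h3.add h4
    have i12 : Integrable (fun y : ℝ => 2 * (a y * b y * g y)) := h1.const_mul 2
    rw [efun, integral_sub i34 i12, integral_add h3 h4, integral_const_mul]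
  have eint2 : (∫ y : ℝ, hyv f y * g y)
      = 2 * (∫ y : ℝ, c y * g y) + ∫ y : ℝ, (b y)^2 * g y := by
    have i2 : Integrable (fun y : ℝ => 2 * (c y * g y)) := h2.const_mul 2
    rw [ehyv, integral_add i2 h4, integral_const_mul]
  simp only [fisherDiv]
  rw [eint, eint2, part1]
  ring
end

section
/- For the Gaussian density f(y) = N(y; μ, σ²), the expected Hyvärinen score under a data-generating density g with finite second moment equals E_g[H(y; f)] = −2/σ² + E_g[(y−μ)²]/σ⁴, and over all (μ, σ²) this is minimized at μ* = E_g[y] and σ²* = Var_g(y), with minimal value −1/Var_g(y). -/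
open Real MeasureTheory

/-- Gaussian density with mean `μ` and variance `v`. -/
noncomputable def gaussPdf (μ v y : ℝ) : ℝ :=
  (Real.sqrt (2 * Real.pi * v))⁻¹ * Real.exp (-(y - μ)^2 / (2 * v))

lemma log_gaussPdf (μ v : ℝ) (hv : 0 < v) (x : ℝ) :
    Real.log (gaussPdf μ v x)
      = -Real.log (Real.sqrt (2 * Real.pi * v)) - (x - μ)^2 / (2 * v) := by
  have hpos : 0 < Real.sqrt (2 * Real.pi * v) := by
    apply Real.sqrt_pos.2; positivity
  unfold gaussPdf
  rw [Real.log_mul (by positivity) (Real.exp_ne_zero _), Real.log_inv, Real.log_exp]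
  ring

lemma deriv1_gauss (μ v : ℝ) (hv : 0 < v) (y : ℝ) :
    deriv (fun x => Real.log (gaussPdf μ v x)) y = -(y - μ) / v := by
  have hfun : (fun x => Real.log (gaussPdf μ v x))
      = fun x => -Real.log (Real.sqrt (2 * Real.pi * v)) - (x - μ)^2 / (2 * v) :=
    funext fun x => log_gaussPdf μ v hv x
  rw [hfun]
  have h1 : HasDerivAt (fun x : ℝ => (x - μ)^2) (2 * (y - μ)) y := by
    simpa using! ((hasDerivAt_id y).sub_const μ).pow 2
  have h2 : HasDerivAt
      (fun x => -Real.log (Real.sqrt (2 * Real.pi * v)) - (x - μ)^2 / (2 * v))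
      (-(2 * (y - μ) / (2 * v))) y := by
    simpa using! (hasDerivAt_const y (-Real.log (Real.sqrt (2 * Real.pi * v)))).sub
      (h1.div_const (2 * v))
  have := h2.deriv
  rw [this]
  field_simp

lemma deriv2_gauss (μ v : ℝ) (hv : 0 < v) (y : ℝ) :
    deriv (deriv fun x => Real.log (gaussPdf μ v x)) y = -1 / v := by
  have hfun : (deriv fun x => Real.log (gaussPdf μ v x)) = fun x => -(x - μ) / v :=
    funext fun x => deriv1_gauss μ v hv x
  rw [hfun]
  have h : HasDerivAt (fun x : ℝ => -(x - μ) / v) (-1 / v) y := by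
    simpa using (((hasDerivAt_id y).sub_const μ).neg.div_const v)
  exact h.deriv

lemma hyv_gauss (μ v : ℝ) (hv : 0 < v) (y : ℝ) :
    hyv (gaussPdf μ v) y = -2 / v + (y - μ)^2 / v^2 := by
  unfold hyv
  rw [deriv2_gauss μ v hv, deriv1_gauss μ v hv]
  field_simp

/-- The expected Hyvärinen score of the Gaussian model under `g` equals
`−2/σ² + E_g[(y−μ)²]/σ⁴`, is minimized at `μ* = E_g[y]`, `σ²* = Var_g(y)`, with
minimal value `−1/Var_g(y)`. -/
theorem stmt19 (g : ℝ → ℝ) (hg : ∀ y, 0 ≤ g y) (hgInt : Integrable g)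
    (hgone : ∫ y : ℝ, g y = 1)
    (hInt1 : Integrable fun y : ℝ => y * g y)
    (hInt2 : ∀ μ : ℝ, Integrable fun y : ℝ => (y - μ)^2 * g y)
    (m V : ℝ) (hm : m = ∫ y : ℝ, y * g y) (hV : V = ∫ y : ℝ, (y - m)^2 * g y)
    (hVpos : 0 < V) :
    (∀ μ v : ℝ, 0 < v →
      ∫ y : ℝ, hyv (gaussPdf μ v) y * g y
        = -2 / v + (∫ y : ℝ, (y - μ)^2 * g y) / v^2) ∧
    (∀ μ v : ℝ, 0 < v →
      -1 / V ≤ -2 / v + (∫ y : ℝ, (y - μ)^2 * g y) / v^2) ∧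
    (∫ y : ℝ, hyv (gaussPdf m V) y * g y = -1 / V) := by
  have key : ∀ μ v : ℝ, 0 < v →
      ∫ y : ℝ, hyv (gaussPdf μ v) y * g y
        = -2 / v + (∫ y : ℝ, (y - μ)^2 * g y) / v^2 := by
    intro μ v hv
    have heq : ∀ y : ℝ, hyv (gaussPdf μ v) y * g y
        = (-2 / v) * g y + (1 / v^2) * ((y - μ)^2 * g y) := by
      intro y
      rw [hyv_gauss μ v hv]
      ring
    simp_rw [heq]
    rw [integral_add (hgInt.const_mul _) ((hInt2 μ).const_mul _),
      integral_const_mul, integral_const_mul, hgone]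
    ring
  have decomp : ∀ μ : ℝ, ∫ y : ℝ, (y - μ)^2 * g y = V + (m - μ)^2 := by
    intro μ
    have heq : ∀ y : ℝ, (y - μ)^2 * g y
        = ((y - m)^2 * g y + (2 * (m - μ)) * (y * g y))
          + ((m - μ)^2 - 2 * (m - μ) * m) * g y := by
      intro y; ring
    simp_rw [heq]
    have i1 : Integrable (fun y : ℝ =>
        (y - m)^2 * g y + 2 * (m - μ) * (y * g y)) := (hInt2 m).add (hInt1.const_mul _)
    have i2 : Integrable (fun y : ℝ =>
        ((m - μ)^2 - 2 * (m - μ) * m) * g y) := hgInt.const_mul _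
    rw [integral_add i1 i2, integral_add (hInt2 m) (hInt1.const_mul _),
      integral_const_mul, integral_const_mul, hgone, ← hm, ← hV]
    ring
  refine ⟨key, ?_, ?_⟩
  · intro μ v hv
    rw [decomp μ]
    have hgap : -2 / v + (V + (m - μ)^2) / v^2 - (-1 / V)
        = ((V - v)^2 + (m - μ)^2 * V) / (v^2 * V) := by
      field_simp
      ring
    have hnn : 0 ≤ ((V - v)^2 + (m - μ)^2 * V) / (v^2 * V) := by positivity
    linarith [hgap ▸ hnn]
  · rw [key m V hVpos, decomp m]
    field_simp
    ring
end
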